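/- Let T ≥ 1 be an integer, 0 < λ < 1, ε ≥ 0, R ∈ ℝ, and δ : {0,…,T−1} → ℝ with |δ_k| ≤ ε for all k < T−1 and δ_{T−1} = R. Define Â_t = Σ_{l=0}^{T−t−1} λ^l δ_{t+l} and Φ_{λ,T} = (1 − λ^{T−1}) / ((1 − λ)·λ^{T−1}). If |R| > ε · Φ_{λ,T}, then for every t ∈ {0,…,T−1}, Â_t has the same sign as R. -/
import Mathlib


/-- Uniform fixed-sign condition: if `|R| > ε Φ_{λ,T}` with
`Φ_{λ,T} = (1-λ^{T-1}) / ((1-λ) λ^{T-1})`, then for every token position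
`t < T` the GAE advantage `Â_t` has the same sign as `R`. -/
theorem gae_uniform_fixed_sign (T : ℕ) (hT : 1 ≤ T) (lam ε R : ℝ)
    (hlam0 : 0 < lam) (hlam1 : lam < 1) (hε : 0 ≤ ε) (δ : ℕ → ℝ)
    (hδ : ∀ k, k < T - 1 → |δ k| ≤ ε) (hR : δ (T - 1) = R)
    (Φ : ℝ) (hΦ : Φ = (1 - lam ^ (T - 1)) / ((1 - lam) * lam ^ (T - 1)))
    (hdom : |R| > ε * Φ) :
    ∀ t, t < T →
      (0 < R → 0 < ∑ l ∈ Finset.range (T - t), lam ^ l * δ (t + l))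
        ∧ (R < 0 → ∑ l ∈ Finset.range (T - t), lam ^ l * δ (t + l) < 0) := by
  intro t ht
  set m := T - 1 - t with hm
  have hTt : T - t = m + 1 := by omega
  have htm : t + m = T - 1 := by omega
  have hlamne : lam ≠ 1 := ne_of_lt hlam1
  have hpowpos : ∀ n : ℕ, (0:ℝ) < lam ^ n := fun n => pow_pos hlam0 n
  have h1lam : (0:ℝ) < 1 - lam := by linarith
  have hmle : m ≤ T - 1 := by omega
  have hkey : (1 - lam ^ m) * lam ^ (T-1) ≤ lam ^ m * (1 - lam ^ (T-1)) := by
    have h1 : lam ^ (T-1) ≤ lam ^ m :=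
      pow_le_pow_of_le_one (le_of_lt hlam0) (le_of_lt hlam1) hmle
    nlinarith [hpowpos m, hpowpos (T-1)]
  have hhead : |∑ l ∈ Finset.range m, lam ^ l * δ (t + l)|
      ≤ ε * ((1 - lam ^ m) / (1 - lam)) := by
    calc |∑ l ∈ Finset.range m, lam ^ l * δ (t + l)|
        ≤ ∑ l ∈ Finset.range m, |lam ^ l * δ (t + l)| :=
          Finset.abs_sum_le_sum_abs _ _
      _ ≤ ∑ l ∈ Finset.range m, lam ^ l * ε := by
          apply Finset.sum_le_sum
          intro l hl
          rw [abs_mul, abs_of_pos (hpowpos l)]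
          exact mul_le_mul_of_nonneg_left
            (hδ _ (by simp only [Finset.mem_range] at hl; omega))
            (le_of_lt (hpowpos l))
      _ = ε * ∑ l ∈ Finset.range m, lam ^ l := by
          rw [Finset.mul_sum]; exact Finset.sum_congr rfl fun _ _ => mul_comm _ _
      _ = ε * ((1 - lam ^ m) / (1 - lam)) := by
          rw [geom_sum_eq hlamne]
          congr 1
          rw [div_eq_div_iff (by intro h; apply hlamne; linarith [sub_eq_zero.mp h])
            (ne_of_gt h1lam)]
          ring
  have hfrac : (1 - lam ^ m) / (1 - lam) ≤ lam ^ m * Φ := by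
    rw [hΦ, ← mul_div_assoc]
    rw [div_le_div_iff₀ h1lam (by positivity)]
    nlinarith [hkey, h1lam]
  have hstrict : ε * ((1 - lam ^ m) / (1 - lam)) < lam ^ m * |R| := by
    have h1 : ε * ((1 - lam ^ m) / (1 - lam)) ≤ lam ^ m * (ε * Φ) := by
      have := mul_le_mul_of_nonneg_left hfrac hε
      linarith [this]
    have h2 : lam ^ m * (ε * Φ) < lam ^ m * |R| :=
      mul_lt_mul_of_pos_left hdom (hpowpos m)
    linarith
  rw [hTt, Finset.sum_range_succ, htm, hR]
  have habs := abs_le.mp (le_of_eq (rfl :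
    |∑ l ∈ Finset.range m, lam ^ l * δ (t + l)| = _))
  have hb1 : -(ε * ((1 - lam ^ m) / (1 - lam))) ≤ ∑ l ∈ Finset.range m, lam ^ l * δ (t + l) :=
    neg_le_of_abs_le hhead
  have hb2 : ∑ l ∈ Finset.range m, lam ^ l * δ (t + l) ≤ ε * ((1 - lam ^ m) / (1 - lam)) :=
    le_of_abs_le hhead
  constructor
  · intro hRpos
    have : |R| = R := abs_of_pos hRpos
    nlinarith [hstrict, hb1]
  · intro hRneg
    have : |R| = -R := abs_of_neg hRneg
    nlinarith [hstrict, hb2]
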